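/- Let F(u,λ,α,β,γ) = -u³ - (λ+u)² + βu - γ(λ+u)u - α. At the point (u,λ,α,β,γ) = (1/3, 0, -1/27, -1/3, -2) the following hold: F = 0, ∂F/∂u = 0, ∂F/∂λ = 0, ∂²F/∂u² = 0, ∂²F/∂u∂λ = 0, while ∂³F/∂u³ = -6 ≠ 0 and ∂²F/∂λ² = -2 ≠ 0. (These are the defining derivative conditions for F to have a winged-cusp singularity at that point.) -/

import Mathlib

/-- The homogeneous steady-state function
`F(u,λ,α,β,γ) = -u³ - (λ+u)² + βu - γ(λ+u)u - α`. -/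
noncomputable def Fss (u lam alp bet gam : ℝ) : ℝ :=
  -u ^ 3 - (lam + u) ^ 2 + bet * u - gam * (lam + u) * u - alp

private lemma hderiv_u (lam u : ℝ) :
    HasDerivAt (fun u => Fss u lam (-1/27) (-1/3) (-2)) (-3*u^2 + 2*u - 1/3) u := by
  unfold Fss
  have hid : HasDerivAt (fun u : ℝ => u) 1 u := hasDerivAt_id u
  have h1 : HasDerivAt (fun u : ℝ => u ^ 3) (3 * u ^ 2) u := by
    simpa using hasDerivAt_pow 3 u
  have h2 : HasDerivAt (fun u : ℝ => (lam + u) ^ 2) (2 * (lam + u)) u := by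
    have := ((hasDerivAt_const u lam).add hid).pow 2
    simp at this; exact this
  have h3 : HasDerivAt (fun u : ℝ => (-1/3 : ℝ) * u) (-1/3) u := by
    simpa using hid.const_mul (-1/3 : ℝ)
  have h4 : HasDerivAt (fun u : ℝ => (-2 : ℝ) * (lam + u) * u)
      ((-2) * ((lam + u) + u)) u := by
    have hl : HasDerivAt (fun u : ℝ => (-2 : ℝ) * (lam + u)) (-2) u := by
      simpa using ((hasDerivAt_const u lam).add hid).const_mul (-2 : ℝ)
    have := hl.mul hid
    exact this.congr_deriv (by ring)
  have h := (((h1.neg.sub h2).add h3).sub h4).sub_const (-1/27 : ℝ)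
  exact h.congr_deriv (by ring)

private lemma deriv_u_eq (lam : ℝ) :
    deriv (fun u => Fss u lam (-1/27) (-1/3) (-2)) = fun u => -3*u^2 + 2*u - 1/3 := by
  funext u
  exact (hderiv_u lam u).deriv

private lemma deriv2_u_eq :
    deriv (deriv (fun u => Fss u 0 (-1/27) (-1/3) (-2))) = fun u => -6*u + 2 := by
  rw [deriv_u_eq]
  funext u
  have h2 : HasDerivAt (fun u : ℝ => (-3 : ℝ) * u ^ 2) (-3 * (2 * u)) u := by
    simpa using (hasDerivAt_pow 2 u).const_mul (-3 : ℝ)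
  have h3 : HasDerivAt (fun u : ℝ => (2 : ℝ) * u) 2 u := by
    simpa using (hasDerivAt_id u).const_mul (2 : ℝ)
  have h : HasDerivAt (fun u : ℝ => -3*u^2 + 2*u - 1/3) (-6*u + 2) u := by
    have := (h2.add h3).sub_const (1/3 : ℝ)
    exact this.congr_deriv (by ring)
  exact h.deriv

private lemma hderiv_lam (lam : ℝ) :
    HasDerivAt (fun lam => Fss (1/3) lam (-1/27) (-1/3) (-2)) (-2*lam) lam := by
  unfold Fss
  have hid : HasDerivAt (fun l : ℝ => l) 1 lam := hasDerivAt_id lam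
  have h2 : HasDerivAt (fun l : ℝ => (l + 1/3) ^ 2) (2 * (lam + 1/3)) lam := by
    have := (hid.add_const (1/3 : ℝ)).pow 2
    simpa [Pi.pow_def] using this
  have h4 : HasDerivAt (fun l : ℝ => (-2 : ℝ) * (l + 1/3) * (1/3))
      ((-2) * (1/3)) lam := by
    have := ((hid.add_const (1/3 : ℝ)).const_mul (-2 : ℝ)).mul_const (1/3 : ℝ)
    exact this.congr_deriv (by ring)
  have h := (((hasDerivAt_const lam (-(1/3 : ℝ) ^ 3)).sub h2).add_const
      ((-1/3 : ℝ) * (1/3))).sub h4 |>.sub_const (-1/27 : ℝ)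
  exact h.congr_deriv (by ring)

private lemma deriv_lam_eq :
    deriv (fun lam => Fss (1/3) lam (-1/27) (-1/3) (-2)) = fun lam => -2*lam := by
  funext lam
  exact (hderiv_lam lam).deriv

theorem wingedCusp_singularity_of_homogeneous_steady_state :
    Fss (1/3) 0 (-1/27) (-1/3) (-2) = 0 ∧
    deriv (fun u => Fss u 0 (-1/27) (-1/3) (-2)) (1/3) = 0 ∧
    deriv (fun lam => Fss (1/3) lam (-1/27) (-1/3) (-2)) 0 = 0 ∧
    deriv (deriv (fun u => Fss u 0 (-1/27) (-1/3) (-2))) (1/3) = 0 ∧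
    deriv (fun lam => deriv (fun u => Fss u lam (-1/27) (-1/3) (-2)) (1/3)) 0 = 0 ∧
    deriv (deriv (deriv (fun u => Fss u 0 (-1/27) (-1/3) (-2)))) (1/3) = -6 ∧
    (-6 : ℝ) ≠ 0 ∧
    deriv (deriv (fun lam => Fss (1/3) lam (-1/27) (-1/3) (-2))) 0 = -2 ∧
    (-2 : ℝ) ≠ 0 := by
  refine ⟨by norm_num [Fss], ?_, ?_, ?_, ?_, ?_, by norm_num, ?_, by norm_num⟩
  · rw [deriv_u_eq]; norm_num
  · rw [deriv_lam_eq]; norm_num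
  · rw [deriv2_u_eq]; norm_num
  · have h : (fun lam => deriv (fun u => Fss u lam (-1/27) (-1/3) (-2)) (1/3))
        = fun _ : ℝ => (0 : ℝ) := by
      funext lam
      rw [deriv_u_eq]; norm_num
    rw [h, deriv_const]
  · rw [deriv2_u_eq]
    have h : deriv (fun u : ℝ => -6*u + 2) = fun _ => (-6 : ℝ) := by
      funext u
      have := ((hasDerivAt_id u).const_mul (-6 : ℝ)).add_const (2 : ℝ)
      simpa using this.deriv
    rw [h]
  · rw [deriv_lam_eq]
    have h : deriv (fun lam : ℝ => -2*lam) = fun _ => (-2 : ℝ) := by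
      funext l
      have := (hasDerivAt_id l).const_mul (-2 : ℝ)
      simpa using this.deriv
    rw [h]
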